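/- (Pólya-Knopp type inequality for Sugeno integral, second case, bounded part.) For any nonnegative measurable function f : [0, ∞) → [0, ∞), the Sugeno integral over [0, ∞) (with respect to Lebesgue measure) of the function x ↦ exp((1/x) · S(x)), where S(x) is the Sugeno integral of t ↦ ln f(t) over [0, x] (taking only the nonnegative part of ln f), is at most e. -/
import Mathlib


open MeasureTheory Set ENNReal Real

/-- Sugeno integral of `g` over `A` w.r.t. a measure `μ` on `ℝ`. -/
noncomputable def sugeno (μ : Measure ℝ) (A : Set ℝ) (g : ℝ → ℝ) : ℝ≥0∞ :=
  ⨆ α : NNReal, ((α : ℝ≥0∞) ⊓ μ (A ∩ {x | (α : ℝ) ≤ g x}))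

lemma sugeno_le_measure (μ : Measure ℝ) (A : Set ℝ) (g : ℝ → ℝ) :
    sugeno μ A g ≤ μ A :=
  iSup_le fun _ => inf_le_right.trans (measure_mono inter_subset_left)

theorem polya_knopp_second_case_bound (f : ℝ → ℝ) (hf : Measurable f) (hf0 : ∀ x, 0 ≤ f x) :
    sugeno volume (Ici 0)
        (fun x => Real.exp ((1 / x) *
          (sugeno volume (Icc 0 x) (fun t => Real.log (f t))).toReal)) ≤
      ENNReal.ofReal (Real.exp 1) := by
  have key : ∀ x : ℝ, 0 ≤ x →
      Real.exp ((1 / x) *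
        (sugeno volume (Icc 0 x) (fun t => Real.log (f t))).toReal) ≤ Real.exp 1 := by
    intro x hx
    apply Real.exp_le_exp.mpr
    rcases eq_or_lt_of_le hx with h0 | h0
    · simp [← h0]
    · have hS : (sugeno volume (Icc 0 x) (fun t => Real.log (f t))).toReal ≤ x := by
        apply ENNReal.toReal_le_of_le_ofReal hx
        have := sugeno_le_measure volume (Icc 0 x) (fun t => Real.log (f t))
        simpa [Real.volume_Icc] using this
      calc (1 / x) * (sugeno volume (Icc 0 x) (fun t => Real.log (f t))).toReal
          ≤ (1 / x) * x := by
            apply mul_le_mul_of_nonneg_left hS (by positivity)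
        _ = 1 := one_div_mul_cancel h0.ne'
  apply iSup_le
  intro α
  by_cases h : (α : ℝ) ≤ Real.exp 1
  · refine inf_le_left.trans ?_
    rw [← ENNReal.ofReal_coe_nnreal]
    exact ENNReal.ofReal_le_ofReal h
  · refine inf_le_right.trans ?_
    have : Ici (0:ℝ) ∩ {x | (α : ℝ) ≤ Real.exp ((1 / x) *
        (sugeno volume (Icc 0 x) (fun t => Real.log (f t))).toReal)} = ∅ := by
      ext x
      simp only [mem_inter_iff, mem_Ici, mem_setOf_eq, mem_empty_iff_false, iff_false, not_and,
        not_le]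
      intro hx
      exact (key x hx).trans_lt (lt_of_not_ge h)
    rw [this]
    simp
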